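/- In the triangular grid under rule 2 with a periodic configuration c (periodic of even period n in both coordinate directions): suppose u is stable for c under rule 2 and the connected component G[0,u] of inactive cells containing u is a finite tree; root this tree at u and let d be its depth (the maximum distance in the tree from u to a leaf). Then every cell of G[0,u] other than u is active after d applications of rule 2. -/

import Mathlib

/-- Neighbors in the triangular grid: cell `(i,j)` is adjacent to `(i-1,j)`,
`(i+1,j)`, and `(i,j-1)` if `i+j` is even, `(i,j+1)` if `i+j` is odd. -/
def triNbrs (p : ℤ × ℤ) : Finset (ℤ × ℤ) :=
  {(p.1 - 1, p.2), (p.1 + 1, p.2),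
   (p.1, if Even (p.1 + p.2) then p.2 - 1 else p.2 + 1)}

/-- Number of active neighbors of `p` in configuration `c`. -/
def triActCount (c : ℤ × ℤ → Bool) (p : ℤ × ℤ) : ℕ :=
  ((triNbrs p).filter (fun q => c q = true)).card

/-- The freezing totalistic rule on the triangular grid with activating set `I`. -/
def ruleT (I : Finset ℕ) (c : ℤ × ℤ → Bool) : ℤ × ℤ → Bool :=
  fun p => c p || decide (triActCount c p ∈ I)

/-- A cell `u` is stable for `c` under `F` if it is inactive and remains
inactive at all times. -/
def isStable (F : (ℤ × ℤ → Bool) → (ℤ × ℤ → Bool)) (c : ℤ × ℤ → Bool)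
    (u : ℤ × ℤ) : Prop :=
  c u = false ∧ ∀ t : ℕ, F^[t] c u = false

/-- A configuration is periodic of period `n` in both coordinate directions. -/
def Periodic (n : ℕ) (c : ℤ × ℤ → Bool) : Prop :=
  ∀ p : ℤ × ℤ, c (p.1 + n, p.2) = c p ∧ c (p.1, p.2 + n) = c p

/-- The graph `G[0]` on the inactive cells of `c`, with adjacency inherited
from the triangular grid. -/
def triG0 (c : ℤ × ℤ → Bool) : SimpleGraph (ℤ × ℤ) where
  Adj p q := p ≠ q ∧ c p = false ∧ c q = false ∧ (q ∈ triNbrs p ∨ p ∈ triNbrs q)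
  symm := ⟨fun p q h => ⟨h.1.symm, h.2.2.1, h.2.1, h.2.2.2.symm⟩⟩
  loopless := ⟨fun p h => h.1 rfl⟩


set_option linter.unusedVariables false

open SimpleGraph

section Stmt7Aux

variable {c : ℤ × ℤ → Bool} {u : ℤ × ℤ} {s : Finset (ℤ × ℤ)}

lemma triNbrs_cases {p q : ℤ × ℤ} (h : q ∈ triNbrs p) :
    q = (p.1-1, p.2) ∨ q = (p.1+1, p.2) ∨
      q = (p.1, if Even (p.1+p.2) then p.2-1 else p.2+1) := by
  simpa [triNbrs] using h

lemma ne_of_mem_triNbrs {p q : ℤ × ℤ} (h : q ∈ triNbrs p) : q ≠ p := by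
  rcases triNbrs_cases h with h | h | h <;> subst h <;>
    simp [Prod.ext_iff] <;> split_ifs <;> omega

lemma triNbrs_symm {p q : ℤ × ℤ} (h : q ∈ triNbrs p) : p ∈ triNbrs q := by
  obtain ⟨i, j⟩ := p
  rcases triNbrs_cases h with h | h | h <;> subst h <;>
    simp [triNbrs, Prod.ext_iff, Int.even_iff, Int.even_sub, Int.even_add] <;>
    split_ifs <;> omega

lemma card_triNbrs (p : ℤ × ℤ) : (triNbrs p).card = 3 := by
  obtain ⟨i, j⟩ := p
  rw [triNbrs, Finset.card_insert_of_notMem, Finset.card_insert_of_notMem,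
    Finset.card_singleton]
  · simp only [Finset.mem_singleton, Prod.ext_iff]
    split_ifs <;> omega
  · simp only [Finset.mem_insert, Finset.mem_singleton, Prod.ext_iff]
    push_neg
    constructor
    · intro h; omega
    · intro h; exfalso; omega

lemma triNbrs_sum {p q : ℤ × ℤ} (h : q ∈ triNbrs p) :
    q.1 + q.2 = p.1 + p.2 + 1 ∨ q.1 + q.2 = p.1 + p.2 - 1 := by
  rcases triNbrs_cases h with h | h | h <;> subst h
  · simp; omega
  · simp; omega
  · simp; split_ifs <;> omega



lemma adj_nbr {p q : ℤ × ℤ} (h : (triG0 c).Adj p q) : q ∈ triNbrs p :=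
  h.2.2.2.elim id triNbrs_symm

lemma adj_mk {p q : ℤ × ℤ} (hp : c p = false) (hq : c q = false)
    (hm : q ∈ triNbrs p) : (triG0 c).Adj p q :=
  ⟨(ne_of_mem_triNbrs hm).symm, hp, hq, Or.inl hm⟩

noncomputable def par (p : ℤ × ℤ) : ZMod 2 := ((p.1 + p.2 : ℤ) : ZMod 2)

lemma adj_par {p q : ℤ × ℤ} (h : (triG0 c).Adj p q) : par q = par p + 1 := by
  rcases triNbrs_sum (adj_nbr h) with h' | h' <;> unfold par <;> rw [h'] <;> push_cast
  · ring
  · ring_nf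
    rw [show (-1 : ZMod 2) = 1 by decide]

lemma walk_par {a b : ℤ × ℤ} (p : (triG0 c).Walk a b) :
    par b = par a + p.length := by
  induction p with
  | nil => simp
  | cons h q ih =>
    rw [ih, adj_par h]
    push_cast [Walk.length_cons]
    ring

lemma dist_par {a b : ℤ × ℤ} (h : (triG0 c).Reachable a b) :
    par b = par a + (triG0 c).dist a b := by
  obtain ⟨p, hp⟩ := h.exists_walk_length_eq_dist
  rw [← hp]; exact walk_par p

lemma dist_tri {a b e : ℤ × ℤ} (h1 : (triG0 c).Reachable a b)
    (h2 : (triG0 c).Reachable b e) :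
    (triG0 c).dist a e ≤ (triG0 c).dist a b + (triG0 c).dist b e := by
  obtain ⟨p, hp⟩ := h1.exists_walk_length_eq_dist
  obtain ⟨q, hq⟩ := h2.exists_walk_length_eq_dist
  rw [← hp, ← hq, ← Walk.length_append]
  exact dist_le _

lemma adj_dist_ne {w q : ℤ × ℤ} (h : (triG0 c).Adj w q)
    (hr : (triG0 c).Reachable u w) :
    (triG0 c).dist u q ≠ (triG0 c).dist u w := by
  intro he
  have hq : (triG0 c).Reachable u q := hr.trans h.reachable
  have h1 := dist_par hr
  have h2 := dist_par hq
  rw [he, ← h1, adj_par h] at h2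
  have : (1 : ZMod 2) = 0 := by
    have := h2.symm
    rwa [left_eq_add] at this
  exact one_ne_zero this

lemma adj_dist {w q : ℤ × ℤ} (h : (triG0 c).Adj w q)
    (hr : (triG0 c).Reachable u w) :
    (triG0 c).dist u q = (triG0 c).dist u w + 1 ∨
      (triG0 c).dist u q + 1 = (triG0 c).dist u w := by
  have hq : (triG0 c).Reachable u q := hr.trans h.reachable
  have h1 : (triG0 c).dist w q ≤ 1 := by
    have := dist_le (Walk.cons h Walk.nil)
    simpa using this
  have h2 : (triG0 c).dist u q ≤ (triG0 c).dist u w + 1 := by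
    have := dist_tri hr h.reachable
    omega
  have h3 : (triG0 c).dist u w ≤ (triG0 c).dist u q + 1 := by
    have := dist_tri hq h.symm.reachable
    have h1' : (triG0 c).dist q w ≤ 1 := by
      have := dist_le (Walk.cons h.symm Walk.nil)
      simpa using this
    omega
  have := adj_dist_ne h hr
  omega

lemma exists_parent {w : ℤ × ℤ} (hr : (triG0 c).Reachable u w) (hw : w ≠ u) :
    ∃ P, (triG0 c).Adj w P ∧ (triG0 c).dist u P + 1 = (triG0 c).dist u w := by
  obtain ⟨p, hp⟩ := hr.exists_walk_length_eq_dist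
  obtain ⟨x, hadj, p', hpe⟩ := p.reverse.exists_eq_cons_of_ne (Ne.symm (Ne.symm hw))
  refine ⟨x, hadj, ?_⟩
  have hlen : p'.length + 1 = (triG0 c).dist u w := by
    have := congrArg Walk.length hpe
    rw [Walk.length_reverse, hp] at this
    simpa using this.symm
  have h1 : (triG0 c).dist u x ≤ p'.length := by
    rw [SimpleGraph.dist_comm]
    exact dist_le p'
  have h2 : (triG0 c).dist u w ≤ (triG0 c).dist u x + 1 := by
    rcases adj_dist hadj (hr := hr) with h | h <;> omega
  omega

/-- The component graph: `triG0 c` restricted to vertices reachable from `u`. -/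
def compG (c : ℤ × ℤ → Bool) (u : ℤ × ℤ) : SimpleGraph (ℤ × ℤ) where
  Adj p q := (triG0 c).Adj p q ∧ (triG0 c).Reachable u p ∧ (triG0 c).Reachable u q
  symm := ⟨fun p q h => ⟨h.1.symm, h.2.2, h.2.1⟩⟩
  loopless := ⟨fun p h => (triG0 c).loopless.irrefl p h.1⟩

lemma compG_le : compG c u ≤ triG0 c := fun _ _ h => h.1

lemma compG_acyclic
    (hacyc : ∀ w, (triG0 c).Reachable u w → ∀ p : (triG0 c).Walk w w, ¬ p.IsCycle) :
    (compG c u).IsAcyclic := by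
  intro v p hp
  have hv : (triG0 c).Reachable u v := by
    cases p with
    | nil => exact absurd rfl hp.ne_nil
    | cons h q => exact h.2.1
  exact hacyc v hv (p.mapLe compG_le) (hp.mapLe compG_le)

lemma reach_support {a b x : ℤ × ℤ} (p : (triG0 c).Walk a b)
    (ha : (triG0 c).Reachable u a) (hx : x ∈ p.support) :
    (triG0 c).Reachable u x :=
  ha.trans ⟨p.takeUntil x hx⟩

lemma transfer_ok {a b : ℤ × ℤ} (p : (triG0 c).Walk a b)
    (ha : (triG0 c).Reachable u a) :
    ∀ e ∈ p.edges, e ∈ (compG c u).edgeSet := by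
  intro e he
  induction e with
  | _ x y =>
    exact ⟨p.adj_of_mem_edges he,
      reach_support p ha (p.fst_mem_support_of_mem_edges he),
      reach_support p ha (p.snd_mem_support_of_mem_edges he)⟩

lemma parent_unique
    (hacyc : ∀ w, (triG0 c).Reachable u w → ∀ p : (triG0 c).Walk w w, ¬ p.IsCycle)
    {w P1 P2 : ℤ × ℤ} (hr : (triG0 c).Reachable u w)
    (h1 : (triG0 c).Adj w P1) (hd1 : (triG0 c).dist u P1 + 1 = (triG0 c).dist u w)
    (h2 : (triG0 c).Adj w P2) (hd2 : (triG0 c).dist u P2 + 1 = (triG0 c).dist u w) :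
    P1 = P2 := by
  have hr1 : (triG0 c).Reachable u P1 := hr.trans h1.reachable
  have hr2 : (triG0 c).Reachable u P2 := hr.trans h2.reachable
  obtain ⟨g1, hg1p, hg1l⟩ := hr1.exists_path_of_dist
  obtain ⟨g2, hg2p, hg2l⟩ := hr2.exists_path_of_dist
  have hnot : ∀ (P : ℤ × ℤ) (g : (triG0 c).Walk u P), g.length + 1 = (triG0 c).dist u w →
      w ∉ g.support := by
    intro P g hgl hmem
    have h3 : (triG0 c).dist u w ≤ (g.takeUntil w hmem).length := dist_le _
    have h4 := g.length_takeUntil_le hmem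
    omega
  have hq1 : ((Walk.cons h1 g1.reverse) : (triG0 c).Walk w u).IsPath := by
    rw [Walk.cons_isPath_iff]
    refine ⟨hg1p.reverse, ?_⟩
    rw [Walk.support_reverse, List.mem_reverse]
    exact hnot P1 g1 (by omega)
  have hq2 : ((Walk.cons h2 g2.reverse) : (triG0 c).Walk w u).IsPath := by
    rw [Walk.cons_isPath_iff]
    refine ⟨hg2p.reverse, ?_⟩
    rw [Walk.support_reverse, List.mem_reverse]
    exact hnot P2 g2 (by omega)
  set q1 : (triG0 c).Walk w u := Walk.cons h1 g1.reverse with hq1def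
  set q2 : (triG0 c).Walk w u := Walk.cons h2 g2.reverse with hq2def
  have ht1 := q1.transfer (compG c u) (transfer_ok q1 hr)
  have hpu := isAcyclic_iff_path_unique.mp (compG_acyclic hacyc)
  have heq : (⟨q1.transfer (compG c u) (transfer_ok q1 hr), hq1.transfer _⟩ :
        (compG c u).Path w u) =
      ⟨q2.transfer (compG c u) (transfer_ok q2 hr), hq2.transfer _⟩ := hpu _ _
  have heq2 : (q1.transfer (compG c u) (transfer_ok q1 hr)).support =
      (q2.transfer (compG c u) (transfer_ok q2 hr)).support := by
    rw [Subtype.mk_eq_mk] at heq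
    rw [heq]
  rw [Walk.support_transfer, Walk.support_transfer, hq1def, hq2def,
    Walk.support_cons, Walk.support_cons, g1.reverse.support_eq_cons,
    g2.reverse.support_eq_cons] at heq2
  injection heq2 with _ h
  injection h

/-- Height of `w` in the component tree rooted at `u`:
the largest distance from `w` to a "descendant" of `w`. -/
noncomputable def ht (c : ℤ × ℤ → Bool) (u : ℤ × ℤ) (s : Finset (ℤ × ℤ))
    (w : ℤ × ℤ) : ℕ :=
  s.sup (fun v => if (triG0 c).dist u v = (triG0 c).dist u w + (triG0 c).dist w v
    then (triG0 c).dist w v else 0)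

lemma ht_child (hs : ∀ w, (triG0 c).Reachable u w ↔ w ∈ s)
    {w q : ℤ × ℤ} (hr : (triG0 c).Reachable u w) (hq : (triG0 c).Adj w q)
    (hd : (triG0 c).dist u q = (triG0 c).dist u w + 1) :
    ht c u s q + 1 ≤ ht c u s w := by
  have hrq : (triG0 c).Reachable u q := hr.trans hq.reachable
  have hwq1 : (triG0 c).dist w q = 1 := dist_eq_one_iff_adj.mpr hq
  have hbase : 1 ≤ ht c u s w := by
    have hle : (if (triG0 c).dist u q = (triG0 c).dist u w + (triG0 c).dist w q
        then (triG0 c).dist w q else 0) ≤ ht c u s w := by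
      unfold ht
      exact Finset.le_sup (f := fun v => if (triG0 c).dist u v = (triG0 c).dist u w + (triG0 c).dist w v then (triG0 c).dist w v else 0) ((hs q).mp hrq)
    rw [if_pos (by omega)] at hle
    omega
  have hsup : ht c u s q ≤ ht c u s w - 1 := by
    apply Finset.sup_le
    intro v hv
    have hrv : (triG0 c).Reachable u v := (hs v).mpr hv
    split_ifs with hdesc
    · have h1 : (triG0 c).dist w v ≤ 1 + (triG0 c).dist q v := by
        have := dist_tri hq.reachable (hrq.symm.trans hrv)
        omega
      have h2 : (triG0 c).dist u v ≤ (triG0 c).dist u w + (triG0 c).dist w v :=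
        dist_tri hr (hr.symm.trans hrv)
      have h3 : (triG0 c).dist w v = (triG0 c).dist q v + 1 := by omega
      have h4 : (triG0 c).dist u v = (triG0 c).dist u w + (triG0 c).dist w v := by omega
      have hle : (if (triG0 c).dist u v = (triG0 c).dist u w + (triG0 c).dist w v
          then (triG0 c).dist w v else 0) ≤ ht c u s w := by
        unfold ht
        exact Finset.le_sup (f := fun v => if (triG0 c).dist u v = (triG0 c).dist u w + (triG0 c).dist w v then (triG0 c).dist w v else 0) hv
      rw [if_pos h4] at hle
      omega
    · omega
  omega

lemma ht_bound (hs : ∀ w, (triG0 c).Reachable u w ↔ w ∈ s) {d : ℕ}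
    (hub : ∀ w, (triG0 c).Reachable u w → (triG0 c).dist u w ≤ d)
    {w : ℤ × ℤ} (hr : (triG0 c).Reachable u w) :
    (triG0 c).dist u w + ht c u s w ≤ d := by
  have h2 : (triG0 c).dist u w ≤ d := hub w hr
  have h1 : ht c u s w ≤ d - (triG0 c).dist u w := by
    apply Finset.sup_le
    intro v hv
    split_ifs with hdesc
    · have := hub v ((hs v).mpr hv)
      omega
    · omega
  omega

lemma ht_max_child (hs : ∀ w, (triG0 c).Reachable u w ↔ w ∈ s)
    {w : ℤ × ℤ} (hr : (triG0 c).Reachable u w) (hpos : 1 ≤ ht c u s w) :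
    ∃ q, (triG0 c).Adj w q ∧ (triG0 c).dist u q = (triG0 c).dist u w + 1 ∧
      ht c u s w ≤ ht c u s q + 1 := by
  have hsne : s.Nonempty := ⟨u, (hs u).mp (Reachable.refl u)⟩
  obtain ⟨v, hv, hvsup⟩ := Finset.exists_mem_eq_sup s hsne (fun v =>
    if (triG0 c).dist u v = (triG0 c).dist u w + (triG0 c).dist w v
      then (triG0 c).dist w v else 0)
  rw [ht] at hpos ⊢
  rw [hvsup] at hpos ⊢
  split_ifs at hpos ⊢ with hdesc
  · -- hdesc : dist u v = dist u w + dist w v, and dist w v ≥ 1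
    have hrv : (triG0 c).Reachable u v := (hs v).mpr hv
    have hrwv : (triG0 c).Reachable w v := hr.symm.trans hrv
    obtain ⟨p, hp⟩ := hrwv.exists_walk_length_eq_dist
    have hwv : w ≠ v := by
      intro he
      rw [he] at hpos
      simp [SimpleGraph.dist_self] at hpos
    obtain ⟨q, hadj, p', hpe⟩ := p.exists_eq_cons_of_ne hwv
    have hlen : p'.length + 1 = (triG0 c).dist w v := by
      have := congrArg Walk.length hpe
      rw [hp] at this
      simpa using this.symm
    have hqv : (triG0 c).dist q v ≤ p'.length := dist_le p'
    refine ⟨q, hadj, ?_, ?_⟩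
    · rcases adj_dist hadj hr with h | h
      · exact h
      · exfalso
        have hrq : (triG0 c).Reachable u q := hr.trans hadj.reachable
        have := dist_tri hrq (hrq.symm.trans hrv)
        omega
    · have hd : (triG0 c).dist u q = (triG0 c).dist u w + 1 := by
        rcases adj_dist hadj hr with h | h
        · exact h
        · exfalso
          have hrq : (triG0 c).Reachable u q := hr.trans hadj.reachable
          have := dist_tri hrq (hrq.symm.trans hrv)
          omega
      have hrq : (triG0 c).Reachable u q := hr.trans hadj.reachable
      have h5 : (triG0 c).dist u v ≤ (triG0 c).dist u q + (triG0 c).dist q v :=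
        dist_tri hrq (hrq.symm.trans hrv)
      have h6 : (triG0 c).dist u v = (triG0 c).dist u q + (triG0 c).dist q v := by omega
      have h7 : (triG0 c).dist q v = (triG0 c).dist w v - 1 := by omega
      have hle : (if (triG0 c).dist u v = (triG0 c).dist u q + (triG0 c).dist q v
          then (triG0 c).dist q v else 0) ≤ ht c u s q := by
        unfold ht
        exact Finset.le_sup (f := fun v => if (triG0 c).dist u v = (triG0 c).dist u q + (triG0 c).dist q v then (triG0 c).dist q v else 0) hv
      rw [if_pos h6] at hle
      omega
  · omega

lemma comp_inactive {w : ℤ × ℤ} (hr : (triG0 c).Reachable u w) (hw : w ≠ u) :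
    c w = false := by
  obtain ⟨P, hP, -⟩ := exists_parent hr hw
  exact hP.2.1

lemma ruleT_true {I : Finset ℕ} {c' : ℤ × ℤ → Bool} {p : ℤ × ℤ}
    (h : c' p = true) : ruleT I c' p = true := by simp [ruleT, h]

lemma iter_mono {I : Finset ℕ} {s t : ℕ} (hst : s ≤ t) {c' : ℤ × ℤ → Bool}
    {p : ℤ × ℤ} (h : (ruleT I)^[s] c' p = true) : (ruleT I)^[t] c' p = true := by
  induction t, hst using Nat.le_induction with
  | base => exact h
  | succ t ht ih =>
    rw [Function.iterate_succ_apply']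
    exact ruleT_true ih

lemma iter_base {I : Finset ℕ} {t : ℕ} {c' : ℤ × ℤ → Bool} {p : ℤ × ℤ}
    (h : c' p = true) : (ruleT I)^[t] c' p = true :=
  iter_mono (Nat.zero_le t) h

lemma count_eq_two {c' : ℤ × ℤ → Bool} {w P : ℤ × ℤ} (hP : P ∈ triNbrs w)
    (hkey : ∀ q ∈ triNbrs w, (c' q = true ↔ q ≠ P)) :
    triActCount c' w = 2 := by
  unfold triActCount
  have heq : (triNbrs w).filter (fun q => c' q = true) = (triNbrs w).erase P := by
    ext q
    simp only [Finset.mem_filter, Finset.mem_erase]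
    constructor
    · rintro ⟨hq, hq'⟩
      exact ⟨(hkey q hq).mp hq', hq⟩
    · rintro ⟨hq, hq'⟩
      exact ⟨hq', (hkey q hq').mpr hq⟩
  rw [heq, Finset.card_erase_of_mem hP, card_triNbrs]

lemma count_ne_two {c' : ℤ × ℤ → Bool} {w P q : ℤ × ℤ} (hP : P ∈ triNbrs w)
    (hq : q ∈ triNbrs w) (hPq : P ≠ q) (haP : ¬ c' P = true) (haq : ¬ c' q = true) :
    triActCount c' w ≠ 2 := by
  intro hcount
  have hsub : (triNbrs w).filter (fun x => c' x = true) ⊆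
      ((triNbrs w).erase P).erase q := by
    intro x hx
    rw [Finset.mem_filter] at hx
    rw [Finset.mem_erase, Finset.mem_erase]
    refine ⟨fun he => haq (he ▸ hx.2), fun he => haP (he ▸ hx.2), hx.1⟩
  have hcard := Finset.card_le_card hsub
  rw [Finset.card_erase_of_mem (Finset.mem_erase.mpr ⟨hPq.symm, hq⟩),
    Finset.card_erase_of_mem hP, card_triNbrs] at hcard
  unfold triActCount at hcount
  omega

lemma ruleT_eq (I : Finset ℕ) (c' : ℤ × ℤ → Bool) (p : ℤ × ℤ) :
    ruleT I c' p = (c' p || decide (triActCount c' p ∈ I)) := rfl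

lemma step_count {t : ℕ} {w : ℤ × ℤ} (hprev : ¬ (ruleT {2})^[t] c w = true)
    (hact : (ruleT {2})^[t+1] c w = true) :
    triActCount ((ruleT {2})^[t] c) w = 2 := by
  rw [Function.iterate_succ_apply', ruleT_eq, Bool.or_eq_true] at hact
  rcases hact with h | h
  · exact absurd h hprev
  · simpa using of_decide_eq_true h

lemma lemA (hstab2 : isStable (ruleT {2}) c u)
    (hs : ∀ w, (triG0 c).Reachable u w ↔ w ∈ s) :
    ∀ t w, (triG0 c).Reachable u w → w ≠ u → (ruleT {2})^[t] c w = true →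
      ht c u s w + 1 ≤ t := by
  intro t
  induction t with
  | zero =>
    intro w hr hw hact
    rw [Function.iterate_zero_apply, comp_inactive hr hw] at hact
    exact absurd hact (by simp)
  | succ t IH =>
    intro w hr hw hact
    by_cases hprev : (ruleT {2})^[t] c w = true
    · exact (IH w hr hw hprev).trans (Nat.le_succ t)
    · have hcount := step_count hprev hact
      obtain ⟨P, hP, hPd⟩ := exists_parent hr hw
      have hPmem : P ∈ triNbrs w := hP.2.2.2.elim id triNbrs_symm
      by_cases hPa : (ruleT {2})^[t] c P = true
      · by_cases hPu : P = u
        · rw [hPu, hstab2.2 t] at hPa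
          exact absurd hPa (by simp)
        · have hrP : (triG0 c).Reachable u P := hr.trans hP.reachable
          have h4 : ht c u s w + 1 ≤ ht c u s P :=
            ht_child hs hrP hP.symm (by omega)
          have h5 := IH P hrP hPu hPa
          omega
      · rcases Nat.eq_zero_or_pos (ht c u s w) with h0 | hpos
        · omega
        · obtain ⟨q, hq, hqd, hqh⟩ := ht_max_child hs hr hpos
          have hqmem : q ∈ triNbrs w := hq.2.2.2.elim id triNbrs_symm
          have hPq : P ≠ q := by
            intro he
            rw [he] at hPd
            omega
          have hqa : (ruleT {2})^[t] c q = true := by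
            by_contra hqa
            exact count_ne_two hPmem hqmem hPq hPa hqa hcount
          have hqu : q ≠ u := by
            intro he
            rw [he, SimpleGraph.dist_self] at hqd
            omega
          have := IH q (hr.trans hq.reachable) hqu hqa
          omega

lemma lemB (hstab2 : isStable (ruleT {2}) c u)
    (hs : ∀ w, (triG0 c).Reachable u w ↔ w ∈ s)
    (hacyc : ∀ w, (triG0 c).Reachable u w → ∀ p : (triG0 c).Walk w w, ¬ p.IsCycle) :
    ∀ m w, (triG0 c).Reachable u w → w ≠ u → ht c u s w = m →
      (ruleT {2})^[m+1] c w = true := by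
  intro m
  induction m using Nat.strong_induction_on with
  | _ m IH =>
    intro w hr hw hm
    obtain ⟨P, hP, hPd⟩ := exists_parent hr hw
    have hPmem : P ∈ triNbrs w := hP.2.2.2.elim id triNbrs_symm
    have hcw : c w = false := hP.2.1
    have hkey : ∀ q ∈ triNbrs w, (((ruleT {2})^[m] c) q = true ↔ q ≠ P) := by
      intro q hqmem
      constructor
      · intro hqa hqP
        subst hqP
        by_cases hPu : q = u
        · rw [hPu, hstab2.2 m] at hqa
          exact absurd hqa (by simp)
        · have hrP : (triG0 c).Reachable u q := hr.trans hP.reachable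
          have h4 : ht c u s w + 1 ≤ ht c u s q :=
            ht_child hs hrP hP.symm (by omega)
          have h5 := lemA hstab2 hs m q hrP hPu hqa
          omega
      · intro hqP
        cases hcq : c q with
        | true => exact iter_base hcq
        | false =>
          have hadj : (triG0 c).Adj w q := ⟨(ne_of_mem_triNbrs hqmem).symm,
            hcw, hcq, Or.inl hqmem⟩
          rcases adj_dist hadj hr with hd | hd
          · have hqu : q ≠ u := by
              intro he
              rw [he, SimpleGraph.dist_self] at hd
              omega
            have hh : ht c u s q + 1 ≤ ht c u s w := ht_child hs hr hadj hd
            have := IH (ht c u s q) (by omega) q (hr.trans hadj.reachable) hqu rfl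
            exact iter_mono (by omega) this
          · exact absurd (parent_unique hacyc hr hadj hd hP hPd) hqP
    have hcount : triActCount ((ruleT {2})^[m] c) w = 2 := count_eq_two hPmem hkey
    rw [Function.iterate_succ_apply', ruleT_eq, hcount]
    simp

end Stmt7Aux

/-- triangular grid under rule 2, `c` periodic of even period
`n`. Suppose `u` is stable under rule 2 and the connected component `G[0,u]`
of inactive cells containing `u` is a finite tree; rooting it at `u`, let `d`
be its depth (the maximum distance in the tree from `u` to a leaf, i.e. the
maximum graph distance from `u` to a cell of the component). Then every cell
of `G[0,u]` other than `u` is active after `d` applications of rule 2. -/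
theorem stmt7 (n : ℕ) (hn : 0 < n) (hne : Even n) (c : ℤ × ℤ → Bool)
    (hper : Periodic n c) (u : ℤ × ℤ)
    (hstab2 : isStable (ruleT {2}) c u)
    -- the component is finite
    (s : Finset (ℤ × ℤ)) (hs : ∀ w, (triG0 c).Reachable u w ↔ w ∈ s)
    -- the component is acyclic (hence a tree, being connected by definition)
    (hacyc : ∀ w, (triG0 c).Reachable u w → ∀ p : (triG0 c).Walk w w, ¬ p.IsCycle)
    -- `d` is the depth of the tree rooted at `u`
    (d : ℕ)
    (hub : ∀ w, (triG0 c).Reachable u w → (triG0 c).dist u w ≤ d)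
    (hmax : ∃ w, (triG0 c).Reachable u w ∧ (triG0 c).dist u w = d) :
    ∀ w, (triG0 c).Reachable u w → w ≠ u → (ruleT {2})^[d] c w = true := by
  intro w hr hw
  have h5 := ht_bound hs hub hr
  have hd1 : 0 < (triG0 c).dist u w := hr.pos_dist_of_ne (Ne.symm hw)
  exact iter_mono (by omega) (lemB hstab2 hs hacyc (ht c u s w) w hr hw rfl)
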